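/- For any continuous function f : [0,T) → ℝ and any t ∈ [0,T), we have ∫₀ᵗ ((t−s)^d / d!) · f(s) ds = the d-fold iterated integral of the single integral of f; consequently, if y solves the Cauchy problem y^{(d+1)} = y·y^{(d)} with y^{(i)}(0)=0 for i<d and y^{(d)}(0)=1, then exp(∫₀ᵗ ((t−s)^d / d!)·y^{(d)}(s) ds) = y^{(d)}(t) for all t ∈ [0,T). -/

import Mathlib

open Set Filter

noncomputable def Kop : (ℝ → ℝ) → ℝ → ℝ := fun g t => ∫ s in (0:ℝ)..t, g s

lemma Kop_cont {g : ℝ → ℝ} (hg : Continuous g) : Continuous (Kop g) :=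
  intervalIntegral.continuous_primitive (fun a b => hg.intervalIntegrable a b) 0

lemma Kop_hasDerivAt {g : ℝ → ℝ} (hg : Continuous g) (s : ℝ) :
    HasDerivAt (Kop g) (g s) s :=
  intervalIntegral.integral_hasDerivAt_right (hg.intervalIntegrable _ _)
    (hg.stronglyMeasurable.stronglyMeasurableAtFilter) hg.continuousAt

lemma Kop_iter_cont {g : ℝ → ℝ} (hg : Continuous g) (n : ℕ) : Continuous (Kop^[n] g) := by
  induction n with
  | zero => exact hg
  | succ n ih => rw [Function.iterate_succ_apply']; exact Kop_cont ih

lemma Kop_iter_congr {g₁ g₂ : ℝ → ℝ} {t : ℝ}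
    (h : ∀ s ∈ Icc (0:ℝ) t, g₁ s = g₂ s) (n : ℕ) :
    ∀ s ∈ Icc (0:ℝ) t, Kop^[n] g₁ s = Kop^[n] g₂ s := by
  induction n with
  | zero => exact h
  | succ n ih =>
    intro s hs
    rw [Function.iterate_succ_apply', Function.iterate_succ_apply']
    apply intervalIntegral.integral_congr
    intro x hx
    have hx' : x ∈ Icc (0:ℝ) t := by
      rw [uIcc_of_le hs.1] at hx
      exact ⟨hx.1, hx.2.trans hs.2⟩
    exact ih x hx'

lemma kernel_int {g : ℝ → ℝ} (hg : Continuous g) (n : ℕ) {t : ℝ} (ht : 0 ≤ t) :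
    (∫ s in (0:ℝ)..t, (t - s) ^ n / (Nat.factorial n) * g s) = Kop (Kop^[n] g) t := by
  induction n generalizing g with
  | zero => simp [Kop]
  | succ n ih =>
    have hKg : Continuous (Kop g) := Kop_cont hg
    have key : (∫ s in (0:ℝ)..t, (t - s) ^ (n+1) / (Nat.factorial (n+1)) * g s)
        = ∫ s in (0:ℝ)..t, (t - s) ^ n / (Nat.factorial n) * Kop g s := by
      have hu : ∀ x ∈ uIcc (0:ℝ) t,
          HasDerivAt (fun s : ℝ => -((t - s) ^ (n+1) / (Nat.factorial (n+1))))
            ((t - x) ^ n / (Nat.factorial n)) x := by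
        intro x _
        have h1 : HasDerivAt (fun s : ℝ => t - s) (-1) x :=
          (hasDerivAt_id x).const_sub t
        have h2 : HasDerivAt (fun s : ℝ => -((t - s) ^ (n+1) / (Nat.factorial (n+1) : ℝ)))
            (-(((n+1 : ℕ) : ℝ) * (t - x) ^ n * -1 / (Nat.factorial (n+1) : ℝ))) x :=
          ((h1.pow (n+1)).div_const ((Nat.factorial (n+1) : ℝ))).neg
        convert h2 using 1
        have hfac : ((Nat.factorial (n+1) : ℝ)) = (n+1) * (Nat.factorial n) := by
          push_cast [Nat.factorial_succ]; ring
        rw [hfac]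
        have hfn : (Nat.factorial n : ℝ) ≠ 0 := by positivity
        field_simp
        push_cast
        ring
      have hv : ∀ x ∈ uIcc (0:ℝ) t, HasDerivAt (Kop g) (g x) x :=
        fun x _ => Kop_hasDerivAt hg x
      have hu' : IntervalIntegrable (fun x : ℝ => (t - x) ^ n / (Nat.factorial n))
          MeasureTheory.volume 0 t := by
        apply Continuous.intervalIntegrable; continuity
      have hv' : IntervalIntegrable g MeasureTheory.volume 0 t :=
        hg.intervalIntegrable 0 t
      have hparts := intervalIntegral.integral_mul_deriv_eq_deriv_mul hu hv hu' hv'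
      have hK0 : Kop g 0 = 0 := by simp [Kop]
      simp only [sub_self, zero_pow (Nat.succ_ne_zero n), zero_div, neg_zero, zero_mul,
        hK0, mul_zero, sub_zero, zero_sub] at hparts
      have : (∫ x in (0:ℝ)..t, -((t - x) ^ (n+1) / (Nat.factorial (n+1))) * g x)
          = -∫ x in (0:ℝ)..t, (t - x) ^ (n+1) / (Nat.factorial (n+1)) * g x := by
        rw [← intervalIntegral.integral_neg]
        congr 1; funext x; ring
      rw [this] at hparts
      have := neg_injective hparts
      linarith [this]
    rw [key, ih hKg, ← Function.iterate_succ_apply]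

theorem stmt_6 (d : ℕ) (hd : 1 ≤ d) (T : ℝ) (hT : 0 < T)
    (J : (ℝ → ℝ) → ℝ → ℝ) (hJ : ∀ g t, J g t = ∫ s in (0 : ℝ)..t, g s)
    (y : ℝ → ℝ) (hy : ContDiff ℝ (d + 1) y)
    (hode : ∀ t ∈ Ico (0 : ℝ) T,
      iteratedDeriv (d + 1) y t = y t * iteratedDeriv d y t)
    (hic : ∀ i < d, iteratedDeriv i y 0 = 0)
    (hicd : iteratedDeriv d y 0 = 1) :
    (∀ f : ℝ → ℝ, ContinuousOn f (Ico (0 : ℝ) T) → ∀ t ∈ Ico (0 : ℝ) T,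
      (∫ s in (0 : ℝ)..t, (t - s) ^ d / (Nat.factorial d) * f s) =
        (J^[d]) (J f) t) ∧
    (∀ t ∈ Ico (0 : ℝ) T,
      Real.exp (∫ s in (0 : ℝ)..t,
          (t - s) ^ d / (Nat.factorial d) * iteratedDeriv d y s) =
        iteratedDeriv d y t) := by
  have hJK : J = Kop := by
    funext g t; rw [hJ g t]; rfl
  subst hJK
  -- Part 1
  have part1 : ∀ f : ℝ → ℝ, ContinuousOn f (Ico (0 : ℝ) T) → ∀ t ∈ Ico (0 : ℝ) T,
      (∫ s in (0 : ℝ)..t, (t - s) ^ d / (Nat.factorial d) * f s) =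
        (Kop^[d]) (Kop f) t := by
    intro f hf t ht
    obtain ⟨ht0, htT⟩ := ht
    set ft : ℝ → ℝ := fun s => f (max 0 (min s t)) with hft_def
    have hsub : Icc (0:ℝ) t ⊆ Ico (0:ℝ) T := Icc_subset_Ico_right htT
    have hft : Continuous ft := by
      apply (hf.mono hsub).comp_continuous
      · exact continuous_const.max (continuous_id.min continuous_const)
      · intro s
        exact ⟨le_max_left _ _, max_le ht0 (min_le_right s t)⟩
    have heq : ∀ s ∈ Icc (0:ℝ) t, ft s = f s := by
      intro s hs
      simp only [hft_def]
      rw [min_eq_left hs.2, max_eq_right hs.1]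
    have hL : (∫ s in (0 : ℝ)..t, (t - s) ^ d / (Nat.factorial d) * f s)
        = ∫ s in (0 : ℝ)..t, (t - s) ^ d / (Nat.factorial d) * ft s := by
      apply intervalIntegral.integral_congr
      intro x hx
      rw [uIcc_of_le ht0] at hx
      simp only [heq x hx]
    have hKeq : ∀ s ∈ Icc (0:ℝ) t, Kop ft s = Kop f s := by
      intro s hs
      apply intervalIntegral.integral_congr
      intro x hx
      rw [uIcc_of_le hs.1] at hx
      exact heq x ⟨hx.1, hx.2.trans hs.2⟩
    calc (∫ s in (0 : ℝ)..t, (t - s) ^ d / (Nat.factorial d) * f s)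
        = ∫ s in (0 : ℝ)..t, (t - s) ^ d / (Nat.factorial d) * ft s := hL
      _ = Kop (Kop^[d] ft) t := kernel_int hft d ht0
      _ = Kop^[d] (Kop ft) t := by
          rw [← Function.iterate_succ_apply' Kop d ft, Function.iterate_succ_apply]
      _ = Kop^[d] (Kop f) t :=
          Kop_iter_congr hKeq d t ⟨ht0, le_refl t⟩
  refine ⟨part1, ?_⟩
  -- Part 2
  intro t ht
  obtain ⟨ht0, htT⟩ := ht
  set z : ℝ → ℝ := iteratedDeriv d y with hz_def
  have hcont_iter : ∀ i ≤ d + 1, Continuous (iteratedDeriv i y) := by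
    intro i hi
    exact hy.continuous_iteratedDeriv i (by exact_mod_cast hi)
  have hdiff_iter : ∀ i ≤ d, Differentiable ℝ (iteratedDeriv i y) := by
    intro i hi
    exact hy.differentiable_iteratedDeriv i (by exact_mod_cast Nat.lt_succ_of_le hi)
  have hderiv_iter : ∀ i ≤ d, ∀ s : ℝ,
      HasDerivAt (iteratedDeriv i y) (iteratedDeriv (i+1) y s) s := by
    intro i hi s
    have h := (hdiff_iter i hi s).hasDerivAt
    rwa [← iteratedDeriv_succ] at h
  -- K of an iterated derivative with vanishing initial value
  have hKstep : ∀ i < d, Kop (iteratedDeriv (i+1) y) = iteratedDeriv i y := by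
    intro i hi
    funext s
    have : (∫ x in (0:ℝ)..s, iteratedDeriv (i+1) y x)
        = iteratedDeriv i y s - iteratedDeriv i y 0 := by
      apply intervalIntegral.integral_eq_sub_of_hasDerivAt
      · intro x _; exact hderiv_iter i (le_of_lt hi) x
      · exact (hcont_iter (i+1) (by omega)).intervalIntegrable 0 s
    rw [show Kop (iteratedDeriv (i+1) y) s = ∫ x in (0:ℝ)..s, iteratedDeriv (i+1) y x from rfl,
      this, hic i hi, sub_zero]
  have hC : ∀ i ≤ d, Kop^[i] (iteratedDeriv i y) = y := by
    intro i hi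
    induction i with
    | zero => simp [iteratedDeriv_zero]
    | succ i ih =>
      rw [Function.iterate_succ_apply, hKstep i (by omega)]
      exact ih (by omega)
  -- the kernel integral equals ∫₀ᵗ y
  have hz_cont : Continuous z := hcont_iter d (by omega)
  have hkernel : (∫ s in (0 : ℝ)..t, (t - s) ^ d / (Nat.factorial d) * z s)
      = Kop y t := by
    rw [kernel_int hz_cont d ht0]
    have h : Kop^[d] z = y := hC d le_rfl
    rw [h]
  rw [hkernel]
  -- uniqueness of the linear ODE solution via vanishing derivative
  have hy_cont : Continuous y := hy.continuous
  have hF : ∀ s : ℝ, HasDerivAt (Kop y) (y s) s := Kop_hasDerivAt hy_cont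
  set g : ℝ → ℝ := fun s => z s * Real.exp (-(Kop y s)) with hg_def
  have hgderiv : ∀ s ∈ Ico (0:ℝ) t, HasDerivWithinAt g 0 (Ici s) s := by
    intro s hs
    have hsT : s ∈ Ico (0:ℝ) T := ⟨hs.1, lt_of_lt_of_le hs.2 (le_of_lt htT)⟩
    have hE : HasDerivAt (fun s => Real.exp (-(Kop y s)))
        (Real.exp (-(Kop y s)) * (-(y s))) s := (hF s).neg.exp
    have hz' : HasDerivAt z (iteratedDeriv (d+1) y s) s := hderiv_iter d le_rfl s
    have hprod := hz'.mul hE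
    have h0 : iteratedDeriv (d+1) y s * Real.exp (-(Kop y s))
        + z s * (Real.exp (-(Kop y s)) * (-(y s))) = 0 := by
      rw [hode s hsT]; ring
    rw [h0] at hprod
    exact hprod.hasDerivWithinAt
  have hgcont : ContinuousOn g (Icc 0 t) :=
    (hz_cont.mul ((Kop_cont hy_cont).neg.rexp)).continuousOn
  have hconst := constant_of_has_deriv_right_zero hgcont hgderiv t ⟨ht0, le_refl t⟩
  have hg0 : g 0 = 1 := by
    show z 0 * Real.exp (-(Kop y 0)) = 1
    have h0 : Kop y 0 = 0 := by simp [Kop]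
    rw [h0, hicd]
    simp
  rw [hg0] at hconst
  have hexp : Real.exp (-(Kop y t)) ≠ 0 := Real.exp_ne_zero _
  have hzt : z t = Real.exp (Kop y t) := by
    have h : z t * Real.exp (-(Kop y t)) = 1 := hconst
    rw [Real.exp_neg] at h
    field_simp at h
    linarith
  rw [← hzt]
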